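/- Let U be an open interval in ℝ and F : U → M_{m×n}(ℂ) (m ≥ n) have real-analytic entries. Let Y(U) = {x ∈ U : F(x) has a repeated singular value}. Then either Y(U) = U or Y(U) has no limit points in U. -/

import Mathlib

open Matrix

open Polynomial

section Aux
variable {N : ℕ}

lemma charpoly_conj_aux (u D : Matrix (Fin N) (Fin N) ℂ)
    (h1 : u * star u = 1) (h2 : star u * u = 1) :
    (u * D * star u).charpoly = D.charpoly := by
  let ψ : Matrix (Fin N) (Fin N) ℂ →+* Matrix (Fin N) (Fin N) ℂ[X] :=
    (Polynomial.C : ℂ →+* ℂ[X]).mapMatrix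
  have hcomm : ∀ A : Matrix (Fin N) (Fin N) ℂ[X],
      Matrix.scalar (Fin N) (X : ℂ[X]) * A = A * Matrix.scalar (Fin N) (X : ℂ[X]) :=
    fun A => (scalar_commute (X : ℂ[X]) (fun r => Commute.all _ _) A).eq
  have key : charmatrix (u * D * star u) = ψ u * charmatrix D * ψ (star u) := by
    rw [charmatrix, charmatrix, mul_sub, sub_mul]
    congr 1
    · rw [← hcomm (ψ u), mul_assoc, ← RingHom.map_mul ψ, h1, RingHom.map_one ψ, mul_one]
    · simp only [ψ, ← RingHom.map_mul]
  rw [Matrix.charpoly, Matrix.charpoly, key, det_mul, det_mul, mul_comm, ← mul_assoc,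
    ← det_mul, ← RingHom.map_mul ψ, h2, RingHom.map_one ψ, det_one, one_mul]

end Aux


open Matrix Polynomial

variable {N : ℕ} {B : Matrix (Fin N) (Fin N) ℂ}

lemma unit_h1 (hB : B.IsHermitian) :
    (hB.eigenvectorUnitary : Matrix (Fin N) (Fin N) ℂ) *
      star (hB.eigenvectorUnitary : Matrix (Fin N) (Fin N) ℂ) = 1 :=
  Matrix.mem_unitaryGroup_iff.mp hB.eigenvectorUnitary.2

lemma unit_h2 (hB : B.IsHermitian) :
    star (hB.eigenvectorUnitary : Matrix (Fin N) (Fin N) ℂ) *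
      (hB.eigenvectorUnitary : Matrix (Fin N) (Fin N) ℂ) = 1 :=
  Matrix.mem_unitaryGroup_iff'.mp hB.eigenvectorUnitary.2

lemma charpoly_diag (d : Fin N → ℂ) :
    (Matrix.diagonal d).charpoly = ∏ i : Fin N, (X - C (d i)) := by
  rw [Matrix.charpoly_of_upperTriangular _ (Matrix.blockTriangular_diagonal d)]
  simp

lemma hermitian_charpoly_roots (hB : B.IsHermitian) :
    B.charpoly.roots = Finset.univ.val.map fun i => (hB.eigenvalues i : ℂ) := by
  have h := hB.spectral_theorem
  rw [show B.charpoly = (Matrix.diagonal ((fun r : ℝ => (r : ℂ)) ∘ hB.eigenvalues)).charpoly by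
    conv_lhs => rw [h]
    exact charpoly_conj_aux _ _ (unit_h1 hB) (unit_h2 hB)]
  rw [charpoly_diag]
  rw [show (∏ i : Fin N, (X - C (((fun r : ℝ => (r : ℂ)) ∘ hB.eigenvalues) i))) =
      ((Finset.univ.val.map fun i => (hB.eigenvalues i : ℂ)).map fun a => X - C a).prod by
    rw [Multiset.map_map]; rfl]
  exact roots_multiset_prod_X_sub_C _

lemma conj_pow_aux (u D : Matrix (Fin N) (Fin N) ℂ)
    (h1 : u * star u = 1) (h2 : star u * u = 1) (k : ℕ) :
    (u * D * star u) ^ k = u * D ^ k * star u := by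
  induction k with
  | zero => simp [h1]
  | succ k ih =>
    rw [pow_succ, pow_succ, ih]
    simp only [mul_assoc]
    rw [show star u * (u * (D * star u)) = (star u * u) * (D * star u) by
      simp only [mul_assoc], h2, one_mul]

lemma hermitian_trace_pow (hB : B.IsHermitian) (k : ℕ) :
    (B ^ k).trace = ∑ i, (hB.eigenvalues i : ℂ) ^ k := by
  conv_lhs => rw [hB.spectral_theorem, Unitary.conjStarAlgAut_apply]
  rw [conj_pow_aux _ _ (unit_h1 hB) (unit_h2 hB), Matrix.trace_mul_comm, ← mul_assoc,
    unit_h2 hB, one_mul, Matrix.diagonal_pow, Matrix.trace_diagonal]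
  simp [RCLike.ofReal_pow]

lemma key_iff {N : ℕ} {B : Matrix (Fin N) (Fin N) ℂ} (hB : B.IsHermitian) :
    ¬ B.charpoly.roots.Nodup ↔
      (Matrix.of fun i j : Fin N => (B ^ ((i : ℕ) + (j : ℕ))).trace).det = 0 := by
  have hM : (Matrix.of fun i j : Fin N => (B ^ ((i : ℕ) + (j : ℕ))).trace) =
      (Matrix.vandermonde fun i => (hB.eigenvalues i : ℂ))ᵀ *
        (Matrix.vandermonde fun i => (hB.eigenvalues i : ℂ)) := by
    ext i j
    rw [Matrix.vandermonde_transpose_mul_vandermonde, Matrix.of_apply,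
      hermitian_trace_pow hB]
  rw [hM, Matrix.det_mul, Matrix.det_transpose, mul_self_eq_zero,
    ← not_ne_iff (a := Matrix.det _) (b := (0 : ℂ)), Matrix.det_vandermonde_ne_zero_iff,
    hermitian_charpoly_roots hB]
  rw [Multiset.nodup_map_iff_inj_on Finset.univ.nodup]
  exact not_congr ⟨fun h a b hab => h a (Finset.mem_univ a) b (Finset.mem_univ b) hab,
    fun h a _ b _ hab => h hab⟩


lemma analytic_entries_mul {m n p : ℕ} {U : Set ℝ}
    {f : ℝ → Matrix (Fin m) (Fin n) ℂ} {g : ℝ → Matrix (Fin n) (Fin p) ℂ}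
    (hf : ∀ i j, AnalyticOnNhd ℝ (fun x => f x i j) U)
    (hg : ∀ i j, AnalyticOnNhd ℝ (fun x => g x i j) U) (i : Fin m) (j : Fin p) :
    AnalyticOnNhd ℝ (fun x => (f x * g x) i j) U := by
  have : (fun x => (f x * g x) i j) = fun x => ∑ k : Fin n, f x i k * g x k j := by
    ext x; rw [Matrix.mul_apply]
  rw [this]
  exact Finset.analyticOnNhd_fun_sum _ fun k _ => (hf i k).mul (hg k j)

lemma analytic_entries_pow {n : ℕ} {U : Set ℝ} {f : ℝ → Matrix (Fin n) (Fin n) ℂ}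
    (hf : ∀ i j, AnalyticOnNhd ℝ (fun x => f x i j) U) (k : ℕ) (i j : Fin n) :
    AnalyticOnNhd ℝ (fun x => (f x ^ k) i j) U := by
  induction k generalizing i j with
  | zero =>
    simp only [pow_zero]
    have : (fun x : ℝ => (1 : Matrix (Fin n) (Fin n) ℂ) i j) =
        fun _ : ℝ => ((1 : Matrix (Fin n) (Fin n) ℂ) i j) := rfl
    rw [this]
    exact analyticOnNhd_const
  | succ k ih =>
    simp only [pow_succ]
    exact analytic_entries_mul (fun i j => ih i j) hf i j


/-- if `F : U → M_{m×n}(ℂ)` (`m ≥ n`) has real-analytic entries on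
an open interval `U ⊆ ℝ`, then the set `Y` of points of `U` where `F` has a
repeated singular value (i.e. the characteristic polynomial of `F(x)ᴴ F(x)` has
a multiple root) is either all of `U` or has no limit points in `U`. -/
theorem repeated_singular_value_analytic (m n : ℕ) (hmn : n ≤ m) (U : Set ℝ)
    (hUo : IsOpen U) (hUi : U.OrdConnected) (hne : U.Nonempty)
    (F : ℝ → Matrix (Fin m) (Fin n) ℂ)
    (hF : ∀ i j, AnalyticOnNhd ℝ (fun x => F x i j) U) :
    {x ∈ U | ¬ ((F x)ᴴ * F x).charpoly.roots.Nodup} = U ∨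
      ∀ x ∈ U, ¬ AccPt x (Filter.principal {x ∈ U | ¬ ((F x)ᴴ * F x).charpoly.roots.Nodup}) := by
  classical
  set Y := {x ∈ U | ¬ ((F x)ᴴ * F x).charpoly.roots.Nodup} with hY
  set g : ℝ → ℂ := fun x =>
    (Matrix.of fun i j : Fin n => (((F x)ᴴ * F x) ^ ((i : ℕ) + (j : ℕ))).trace).det with hg
  -- analyticity of g
  have hFH : ∀ i j, AnalyticOnNhd ℝ (fun x => (F x)ᴴ i j) U := by
    intro i j
    have : (fun x => (F x)ᴴ i j) = fun x => (starRingEnd ℂ) (F x j i) := rfl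
    rw [this]
    exact fun x hx =>
      ((Complex.conjCLE : ℂ →L[ℝ] ℂ).analyticAt _).comp ((hF j i) x hx)
  have hB : ∀ i j, AnalyticOnNhd ℝ (fun x => ((F x)ᴴ * F x) i j) U :=
    fun i j => analytic_entries_mul hFH hF i j
  have htr : ∀ k : ℕ, AnalyticOnNhd ℝ (fun x => (((F x)ᴴ * F x) ^ k).trace) U := by
    intro k
    have : (fun x => (((F x)ᴴ * F x) ^ k).trace) =
        fun x => ∑ i : Fin n, (((F x)ᴴ * F x) ^ k) i i := rfl
    rw [this]
    exact Finset.analyticOnNhd_fun_sum _ fun i _ => analytic_entries_pow hB k i i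
  have hga : AnalyticOnNhd ℝ g U := by
    have : g = fun x => ∑ σ : Equiv.Perm (Fin n), (Equiv.Perm.sign σ : ℂ) *
        ∏ i : Fin n, (((F x)ᴴ * F x) ^ ((σ i : ℕ) + (i : ℕ))).trace := by
      funext x
      show (Matrix.of fun i j : Fin n => (((F x)ᴴ * F x) ^ ((i : ℕ) + (j : ℕ))).trace).det = _
      rw [Matrix.det_apply']
      simp [Matrix.of_apply]
    rw [this]
    exact Finset.analyticOnNhd_fun_sum _ fun σ _ =>
      analyticOnNhd_const.mul (Finset.analyticOnNhd_fun_prod _ fun i _ => htr _)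
  -- key pointwise equivalence
  have hkey : ∀ x, ¬ ((F x)ᴴ * F x).charpoly.roots.Nodup ↔ g x = 0 := fun x =>
    key_iff (Matrix.isHermitian_conjTranspose_mul_self (F x))
  by_cases hacc : ∃ x₀ ∈ U, AccPt x₀ (Filter.principal Y)
  · left
    obtain ⟨x₀, hx₀U, hx₀⟩ := hacc
    have hfreq : ∃ᶠ y in nhdsWithin x₀ {x₀}ᶜ, g y = 0 := by
      have h1 : ∃ᶠ y in nhds x₀, y ≠ x₀ ∧ y ∈ Y := accPt_iff_frequently.mp hx₀
      rw [Filter.frequently_iff] at h1 ⊢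
      intro s hs
      rw [mem_nhdsWithin] at hs
      obtain ⟨t, hto, hxt, hts⟩ := hs
      obtain ⟨y, hy, hyne, hyY⟩ := h1 (hto.mem_nhds hxt)
      exact ⟨y, hts ⟨hy, hyne⟩, (hkey y).mp hyY.2⟩
    have hzero : Set.EqOn g 0 U :=
      hga.eqOn_zero_of_preconnected_of_frequently_eq_zero hUi.isPreconnected hx₀U hfreq
    apply Set.Subset.antisymm (Set.sep_subset _ _)
    intro x hxU
    exact ⟨hxU, (hkey x).mpr (hzero hxU)⟩
  · right
    push_neg at hacc
    exact hacc
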